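/- arXiv:2210.13850 — 2 statements merged into one kernel-verified Lean document; each statement's English description precedes it below -/
import Mathlib

section
/- Let α ≥ (1+√17)/4 and let Opt₁, Opt₂, t, s, p, d, a ≥ 0 be real numbers satisfying: t ≥ α·Opt₁, t + s ≤ (1+α)·Opt₁, p ≤ Opt₁, Opt₂ ≥ α·Opt₁ + d (release-time bound), t + s + p > α·Opt₂ (no interruption), and a ≤ Opt₂ - α·Opt₁. Then d + a ≤ Opt₂. -/
theorem stmt_14 (α Opt₁ Opt₂ t s p d a : ℝ) (hα : (1 + Real.sqrt 17) / 4 ≤ α)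
    (hOpt₁ : 0 ≤ Opt₁) (hOpt₂ : 0 ≤ Opt₂) (ht : 0 ≤ t) (hs : 0 ≤ s)
    (hp : 0 ≤ p) (hd : 0 ≤ d) (ha : 0 ≤ a)
    (hwait : α * Opt₁ ≤ t) (hgood : t + s ≤ (1 + α) * Opt₁)
    (hpb : p ≤ Opt₁) (hrel : α * Opt₁ + d ≤ Opt₂)
    (hnoint : α * Opt₂ < t + s + p) (hobs : a ≤ Opt₂ - α * Opt₁) :
    d + a ≤ Opt₂ := by
  have h17 : (3:ℝ) ≤ Real.sqrt 17 := by
    nlinarith [Real.sq_sqrt (by norm_num : (17:ℝ) ≥ 0), Real.sqrt_nonneg 17]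
  have hα1 : (1:ℝ) ≤ α := by linarith
  have hkey : α + 2 ≤ 2 * α ^ 2 := by
    nlinarith [Real.sq_sqrt (by norm_num : (17:ℝ) ≥ 0), Real.sqrt_nonneg 17]
  -- α*Opt₂ < (2+α)*Opt₁
  have h1 : α * Opt₂ < (2 + α) * Opt₁ := by nlinarith
  -- d ≤ α*Opt₁
  have h2 : d ≤ α * Opt₁ := by nlinarith
  linarith
end

section
/- Let α ≥ (3+√129)/10 and let Opt₁, Opt₂, d, p ≥ 0 be real numbers with Opt₂ ≥ α·Opt₁ and d > α·Opt₂ - Opt₁. If additionally Opt₂ ≥ α·Opt₁ + d - (Opt₁ + p)/2 - p and Opt₂ > p + α·Opt₂ - Opt₁, then Opt₂ > Opt₂, a contradiction; hence the four hypotheses are jointly unsatisfiable. -/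
theorem stmt_16 (α Opt₁ Opt₂ d p : ℝ) (hα : (3 + Real.sqrt 129) / 10 ≤ α)
    (hOpt₁ : 0 ≤ Opt₁) (hOpt₂ : 0 ≤ Opt₂) (hd : 0 ≤ d) (hp : 0 ≤ p)
    (h1 : α * Opt₁ ≤ Opt₂) (h2 : α * Opt₂ - Opt₁ < d)
    (h3 : α * Opt₁ + d - (Opt₁ + p) / 2 - p ≤ Opt₂)
    (h4 : p + α * Opt₂ - Opt₁ < Opt₂) :
    False := by
  have hs : (11 : ℝ) ≤ Real.sqrt 129 := by
    have : (11 : ℝ) = Real.sqrt 121 := by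
      rw [show (121:ℝ) = 11^2 by norm_num, Real.sqrt_sq]; norm_num
    rw [this]; exact Real.sqrt_le_sqrt (by norm_num)
  have hα2 : (1.4 : ℝ) ≤ α := by linarith
  have hOpt₂pos : 0 < Opt₂ := by
    rcases lt_or_eq_of_le hOpt₂ with h | h
    · exact h
    · exfalso
      have h1' : Opt₁ ≤ 0 := by nlinarith
      have hO1 : Opt₁ = 0 := le_antisymm h1' hOpt₁
      rw [hO1, ← h] at h4
      nlinarith
  -- key linear combination: (α-3)*Opt₁ + (5/2)*(α-1)*Opt₂ < 0
  have hL : (α - 3) * Opt₁ + (5/2) * (α - 1) * Opt₂ < 0 := by nlinarith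
  -- coefficient fact: 5α² - 3α - 6 ≥ 0
  have hsq : Real.sqrt 129 ^ 2 = 129 := Real.sq_sqrt (by norm_num)
  have hcoef : 5 * α^2 - 3 * α - 6 ≥ 0 := by nlinarith [sq_nonneg (10*α - 3 - Real.sqrt 129)]
  rcases le_or_gt α 3 with hc | hc
  · -- multiply hL by α and use α*Opt₁ ≤ Opt₂ with α-3 ≤ 0
    nlinarith [mul_nonneg (by linarith : (0:ℝ) ≤ 3 - α) (by linarith : Opt₂ - α * Opt₁ ≥ 0),
      mul_nonneg (by linarith : (0:ℝ) ≤ 5 * α^2 - 3 * α - 6) hOpt₂,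
      mul_pos (by linarith : (0:ℝ) < α) hOpt₂pos]
  · nlinarith [mul_nonneg (by linarith : (0:ℝ) ≤ α - 3) hOpt₁,
      mul_pos (by linarith : (0:ℝ) < α - 1) hOpt₂pos]
end
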